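/- Let P, Q ∈ GL⁺(H) be such that P, Q and the frame operator S_Λ pairwise commute. Then for every f ∈ H, ∫_Ω ⟨Λ_w P f, Λ_w Q f⟩ dμ(w) = ∫_Ω ‖Λ_w (PQ)^{1/2} f‖² dμ(w); in particular the left-hand integral is a nonnegative real number. -/

import Mathlib

set_option maxHeartbeats 1000000


open MeasureTheory
open scoped ComplexInnerProductSpace

lemma sqrt_mem_elemental' {A : Type*} [CStarAlgebra A] [PartialOrder A] [StarOrderedRing A]
    (a : A) (ha : 0 ≤ a) : CFC.sqrt a ∈ StarAlgebra.elemental ℂ a := by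
  have h1 : CFC.sqrt a = cfc (fun z : ℂ => ((NNReal.sqrt z.re.toNNReal : ℝ) : ℂ)) a := by
    rw [CFC.sqrt_eq_cfc, cfc_nnreal_eq_real NNReal.sqrt a ha,
      cfc_real_eq_complex _ (IsSelfAdjoint.of_nonneg ha)]
  have hsn : IsStarNormal a := (IsSelfAdjoint.of_nonneg ha).isStarNormal
  rw [h1, cfc_apply _ a hsn (Continuous.continuousOn (by continuity)),
    cfcHom_eq_of_isStarNormal]
  exact SetLike.coe_mem _

lemma commute_of_mem_elemental' {A : Type*} [CStarAlgebra A] {a b x : A}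
    (h : Commute b a) (hstar : Commute b (star a)) (hx : x ∈ StarAlgebra.elemental ℂ a) :
    Commute b x := by
  have hcl : IsClosed ((StarSubalgebra.centralizer ℂ {b} : StarSubalgebra ℂ A) : Set A) := by
    rw [StarSubalgebra.coe_centralizer]
    have heq : (({b} ∪ star ({b} : Set A)) : Set A).centralizer =
        ⋂ g ∈ (({b} ∪ star ({b} : Set A)) : Set A), {z : A | g * z = z * g} := by
      ext z
      simp only [Set.mem_centralizer_iff, Set.mem_iInter, Set.mem_setOf_eq]
    rw [heq]
    exact isClosed_biInter fun g _ =>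
      isClosed_eq (continuous_const.mul continuous_id) (continuous_id.mul continuous_const)
  have hmem : a ∈ StarSubalgebra.centralizer ℂ {b} := by
    rw [StarSubalgebra.mem_centralizer_iff]
    rintro g rfl
    refine ⟨h.eq, ?_⟩
    have h2 := congrArg star hstar.eq
    rw [star_mul, star_mul, star_star] at h2
    exact h2.symm
  have hx' : x ∈ StarSubalgebra.centralizer ℂ {b} :=
    StarAlgebra.elemental.le_of_mem hcl hmem hx
  rw [StarSubalgebra.mem_centralizer_iff] at hx'
  exact (hx' b rfl).1

/-- If `P, Q ∈ GL⁺(H)` commute with each other and with the frame operator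
`S_Λ` of the continuous g-Bessel family `(Λ_w)`, then for every `f ∈ H`,
`∫ ⟨Λ_w P f, Λ_w Q f⟩ dμ = ∫ ‖Λ_w (PQ)^{1/2} f‖² dμ`. -/
theorem controlled_inner_integral_eq_sqrt_norm_integral
    {H L Ω : Type*}
    [NormedAddCommGroup H] [InnerProductSpace ℂ H] [CompleteSpace H]
    [NormedAddCommGroup L] [InnerProductSpace ℂ L] [CompleteSpace L]
    [MeasurableSpace Ω] (μ : Measure Ω)
    (Λ : Ω → H →L[ℂ] L)
    (hmeas : ∀ f : H, AEStronglyMeasurable (fun w => Λ w f) μ)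
    (hint : ∀ f : H, Integrable (fun w => ‖Λ w f‖ ^ 2) μ)
    -- (Λ_w) is a continuous g-Bessel family
    (B₀ : ℝ) (hB₀ : 0 < B₀)
    (hBessel : ∀ f : H, ∫ w, ‖Λ w f‖ ^ 2 ∂μ ≤ B₀ * ‖f‖ ^ 2)
    -- P, Q ∈ GL⁺(H)
    (P Q Pinv Qinv : H →L[ℂ] H)
    (hP : P.IsPositive) (hPinv : P * Pinv = 1 ∧ Pinv * P = 1)
    (hQ : Q.IsPositive) (hQinv : Q * Qinv = 1 ∧ Qinv * Q = 1)
    -- the frame operator S_Λ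
    (SΛ : H →L[ℂ] H)
    (hSΛ : ∀ f g : H, ⟪SΛ f, g⟫ = ∫ w, ⟪Λ w f, Λ w g⟫ ∂μ)
    -- P, Q, S_Λ pairwise commute
    (hPQ : P * Q = Q * P) (hPS : P * SΛ = SΛ * P) (hQS : Q * SΛ = SΛ * Q)
    -- R = (PQ)^{1/2}, the positive square root of PQ
    (R : H →L[ℂ] H) (hR : R.IsPositive) (hRsq : R * R = P * Q) :
    ∀ f : H,
      ∫ w, ⟪Λ w (P f), Λ w (Q f)⟫ ∂μ = ((∫ w, ‖Λ w (R f)‖ ^ 2 ∂μ : ℝ) : ℂ) := by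
  have hPpos : (0 : H →L[ℂ] H) ≤ P := (ContinuousLinearMap.nonneg_iff_isPositive P).mpr hP
  have hQpos : (0 : H →L[ℂ] H) ≤ Q := (ContinuousLinearMap.nonneg_iff_isPositive Q).mpr hQ
  have hRpos : (0 : H →L[ℂ] H) ≤ R := (ContinuousLinearMap.nonneg_iff_isPositive R).mpr hR
  have hPstar : star P = P := hP.isSelfAdjoint
  have hQstar : star Q = Q := hQ.isSelfAdjoint
  have hRstar : star R = R := hR.isSelfAdjoint
  -- P * Q is positive
  have hsP := CFC.sqrt_nonneg (a := P)
  have hsPstar : star (CFC.sqrt P) = CFC.sqrt P := IsSelfAdjoint.of_nonneg hsP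
  have hQsP : Commute Q (CFC.sqrt P) :=
    commute_of_mem_elemental' (hPQ.symm) (by rw [hPstar]; exact hPQ.symm)
      (sqrt_mem_elemental' P hPpos)
  have hPQpos : (0 : H →L[ℂ] H) ≤ P * Q := by
    have h1 : (0 : H →L[ℂ] H) ≤ star (CFC.sqrt P) * Q * CFC.sqrt P := star_left_conjugate_nonneg hQpos _
    rwa [hsPstar, mul_assoc, hQsP.eq, ← mul_assoc, CFC.sqrt_mul_sqrt_self P hPpos] at h1
  have hPQstar : star (P * Q) = P * Q := by rw [star_mul, hPstar, hQstar, ← hPQ]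
  have hReq : CFC.sqrt (P * Q) = R := CFC.sqrt_unique hRsq hRpos
  -- SΛ commutes with R
  have hSPQ : Commute SΛ (P * Q) := by
    show SΛ * (P * Q) = P * Q * SΛ
    rw [← mul_assoc, ← hPS, mul_assoc, ← hQS, mul_assoc]
  have hSR : Commute SΛ R := by
    rw [← hReq]
    exact commute_of_mem_elemental' hSPQ (by rwa [hPQstar])
      (sqrt_mem_elemental' _ hPQpos)
  -- selfadjointness as inner product identities
  have hQinner : ∀ x y : H, ⟪x, Q y⟫ = ⟪Q x, y⟫ := fun x y => by
    conv_rhs => rw [← hQstar]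
    rw [ContinuousLinearMap.star_eq_adjoint, ContinuousLinearMap.adjoint_inner_left]
  have hRinner : ∀ x y : H, ⟪x, R y⟫ = ⟪R x, y⟫ := fun x y => by
    conv_rhs => rw [← hRstar]
    rw [ContinuousLinearMap.star_eq_adjoint, ContinuousLinearMap.adjoint_inner_left]
  intro f
  have hop1 : Q * (SΛ * P) = SΛ * (P * Q) := by
    rw [← mul_assoc, hQS, mul_assoc, ← hPQ]
  have hop2 : R * (SΛ * R) = SΛ * (P * Q) := by
    rw [← mul_assoc, ← hSR.eq, mul_assoc, hRsq]
  calc ∫ w, ⟪Λ w (P f), Λ w (Q f)⟫ ∂μ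
      = ⟪SΛ (P f), Q f⟫ := (hSΛ _ _).symm
    _ = ⟪Q (SΛ (P f)), f⟫ := by rw [← hQinner]
    _ = ⟪(Q * (SΛ * P)) f, f⟫ := rfl
    _ = ⟪(R * (SΛ * R)) f, f⟫ := by rw [hop1, ← hop2]
    _ = ⟪R (SΛ (R f)), f⟫ := rfl
    _ = ⟪SΛ (R f), R f⟫ := by rw [← hRinner]
    _ = ∫ w, ⟪Λ w (R f), Λ w (R f)⟫ ∂μ := hSΛ _ _
    _ = ∫ w, ((‖Λ w (R f)‖ ^ 2 : ℝ) : ℂ) ∂μ := by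
        refine integral_congr_ae (Filter.Eventually.of_forall fun w => ?_)
        show ⟪(Λ w) (R f), (Λ w) (R f)⟫ = ((‖(Λ w) (R f)‖ ^ 2 : ℝ) : ℂ)
        rw [inner_self_eq_norm_sq_to_K]
        norm_cast
    _ = ((∫ w, ‖Λ w (R f)‖ ^ 2 ∂μ : ℝ) : ℂ) := integral_ofReal (f := fun w => ‖(Λ w) (R f)‖ ^ 2)
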